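/- Let X = {x_j}_{j ∈ J} be a finite frame for a complex Hilbert space H with dim H > 1. If every binary operation • : J × J → J is a frame multiplication for X, then X is linearly independent, hence a basis for H. If, in addition, X is a tight frame (respectively a Parseval frame) for H, then X is an orthogonal (respectively orthonormal) basis for H. -/

import Mathlib

open scoped ComplexInnerProductSpace

/-- A binary operation `op` on the index set `J` is a *frame multiplication* for the
family `x : J → H` if there is a bilinear map `m : H × H → H` with
`m (x j) (x k) = x (op j k)` for all `j, k`. -/
def IsFrameMult {H : Type} [NormedAddCommGroup H] [InnerProductSpace ℂ H]
    {J : Type} (x : J → H) (op : J → J → J) : Prop :=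
  ∃ m : H →ₗ[ℂ] H →ₗ[ℂ] H, ∀ j k : J, m (x j) (x k) = x (op j k)

/-- Let `X = {x_j}` be a finite frame for a complex Hilbert space `H` with
`dim H > 1`.  If every binary operation on `J` is a frame multiplication for `X`, then `X`
is linearly independent, hence a basis for `H`.  If in addition `X` is a tight frame
(resp. a Parseval frame), then `X` is an orthogonal (resp. orthonormal) basis for `H`. -/
theorem stmt_12 {H : Type} [NormedAddCommGroup H] [InnerProductSpace ℂ H]
    [FiniteDimensional ℂ H] {J : Type} [Fintype J]
    (x : J → H) (hframe : Submodule.span ℂ (Set.range x) = ⊤)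
    (hdim : 1 < Module.finrank ℂ H)
    (hall : ∀ op : J → J → J, IsFrameMult x op) :
    LinearIndependent ℂ x ∧
    ((∃ A : ℝ, 0 < A ∧ ∀ v : H, ∑ j, ‖⟪x j, v⟫‖ ^ 2 = A * ‖v‖ ^ 2) →
      ∀ i j : J, i ≠ j → ⟪x i, x j⟫ = 0) ∧
    ((∀ v : H, ∑ j, ‖⟪x j, v⟫‖ ^ 2 = ‖v‖ ^ 2) → Orthonormal ℂ x) := by
  classical
  have hne : Nonempty J := by
    by_contra h
    rw [not_nonempty_iff] at h
    rw [Set.range_eq_empty x, Submodule.span_empty] at hframe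
    have : Module.finrank ℂ H = 0 := by
      rw [← finrank_top ℂ H, ← hframe, finrank_bot]
    omega
  have key0 : ∀ c : J → ℂ, ∑ j, c j • x j = 0 → ∀ f : J → J, ∑ j, c j • x (f j) = 0 := by
    intro c hc f
    obtain ⟨m, hm⟩ := hall (fun j _ => f j)
    obtain ⟨k⟩ := hne
    have h := congrArg (fun v => m v (x k)) hc
    simpa [map_sum, LinearMap.sum_apply, hm] using h
  have hli : LinearIndependent ℂ x := by
    rw [Fintype.linearIndependent_iff]
    intro c hc j0
    by_contra hcj
    have hS : ∀ k, (∑ j, c j) • x k = 0 := fun k => by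
      simpa [Finset.sum_smul] using key0 c hc (fun _ => k)
    have hak : ∀ a k : J, x a = x k := by
      intro a k
      have h1 := key0 c hc (fun j => if j = j0 then a else k)
      have h2 : ∑ j, c j • x (if j = j0 then a else k)
          = c j0 • x a + ∑ j ∈ Finset.univ.erase j0, c j • x k := by
        rw [← Finset.add_sum_erase _ _ (Finset.mem_univ j0)]
        simp only [if_pos rfl]
        congr 1
        exact Finset.sum_congr rfl fun j hj => by
          rw [if_neg (Finset.mem_erase.mp hj).1]
      rw [h2, ← Finset.sum_smul, Finset.sum_erase_eq_sub (Finset.mem_univ j0),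
        sub_smul, hS k] at h1
      have h3 : c j0 • (x a - x k) = 0 := by
        rw [smul_sub]; linear_combination (norm := module) h1
      rcases smul_eq_zero.mp h3 with h | h
      · exact absurd h hcj
      · exact sub_eq_zero.mp h
    obtain ⟨k⟩ := hne
    have hr : Set.range x ⊆ {x k} := by rintro _ ⟨a, rfl⟩; exact hak a k
    have hle := Submodule.span_mono (R := ℂ) hr
    rw [hframe] at hle
    have : Module.finrank ℂ H ≤ 1 := by
      calc Module.finrank ℂ H = Module.finrank ℂ (⊤ : Submodule ℂ H) :=
            (finrank_top ℂ H).symm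
        _ ≤ Module.finrank ℂ (Submodule.span ℂ ({x k} : Set H)) :=
            Submodule.finrank_mono hle
        _ ≤ 1 := by simpa using finrank_span_le_card ({x k} : Set H)
    omega
  have key : ∀ A : ℝ, 0 < A → (∀ v : H, ∑ j, ‖⟪x j, v⟫‖ ^ 2 = A * ‖v‖ ^ 2) →
      ∀ i j : J, ⟪x j, x i⟫ = (A : ℂ) * (if j = i then 1 else 0) := by
    intro A hA htight
    set T : H →ₗ[ℂ] H :=
      ∑ j, ((innerSL ℂ (x j)).toLinearMap).smulRight (x j) with hT
    have hTv : ∀ v, T v = ∑ j, ⟪x j, v⟫ • x j := by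
      intro v; simp [hT, LinearMap.sum_apply]
    have hTz : T - (A : ℂ) • LinearMap.id = 0 := by
      rw [← inner_map_self_eq_zero]
      intro v
      have h1 : ⟪T v, v⟫ = ((A * ‖v‖ ^ 2 : ℝ) : ℂ) := by
        rw [hTv, sum_inner]
        have : ∀ j, ⟪(⟪x j, v⟫ : ℂ) • x j, v⟫ = ((‖⟪x j, v⟫‖ ^ 2 : ℝ) : ℂ) := by
          intro j
          rw [inner_smul_left, RCLike.conj_mul]
          norm_cast
        rw [Finset.sum_congr rfl (fun j _ => this j)]
        rw [← Complex.ofReal_sum]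
        rw [htight v]
      have h2 : ⟪((A : ℂ) • LinearMap.id : H →ₗ[ℂ] H) v, v⟫ = ((A * ‖v‖ ^ 2 : ℝ) : ℂ) := by
        rw [LinearMap.smul_apply, LinearMap.id_apply, inner_smul_left,
          inner_self_eq_norm_sq_to_K, Complex.conj_ofReal]
        norm_num
      rw [LinearMap.sub_apply, inner_sub_left, h1, h2, sub_self]
    have hTA : ∀ v, T v = (A : ℂ) • v := by
      intro v
      have := sub_eq_zero.mp hTz
      rw [this]; rfl
    -- the analysis map
    set Φ : H →ₗ[ℂ] (J → ℂ) :=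
      LinearMap.pi (fun j => ((innerSL ℂ (x j)).toLinearMap)) with hΦ
    have hΦapp : ∀ v j, Φ v j = ⟪x j, v⟫ := fun v j => rfl
    have hinj : Function.Injective Φ := by
      rw [injective_iff_map_eq_zero]
      intro v hv
      have hv' : ∀ j, ⟪x j, v⟫ = 0 := fun j => by
        have := congrFun hv j; simpa [hΦapp] using this
      have hall' : ∀ u : H, ⟪u, v⟫ = 0 := by
        intro u
        have hu : u ∈ Submodule.span ℂ (Set.range x) := by rw [hframe]; trivial
        induction hu using Submodule.span_induction with
        | mem u hu => obtain ⟨j, rfl⟩ := hu; exact hv' j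
        | zero => simp
        | add u w _ _ hu hw => rw [inner_add_left, hu, hw, add_zero]
        | smul c u _ hu => rw [inner_smul_left, hu, mul_zero]
      exact inner_self_eq_zero.mp (hall' v)
    have hsurj : Function.Surjective Φ := by
      have b : Module.Basis J ℂ H := Module.Basis.mk hli (by rw [hframe])
      have hcard : Module.finrank ℂ H = Fintype.card J := Module.finrank_eq_card_basis b
      have hfr : Module.finrank ℂ H = Module.finrank ℂ (J → ℂ) := by
        rw [hcard, Module.finrank_fintype_fun_eq_card]
      exact (LinearMap.injective_iff_surjective_of_finrank_eq_finrank hfr).mp hinj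
    intro i j
    obtain ⟨v, hv⟩ := hsurj (Pi.single i 1)
    have hvj : ∀ j, ⟪x j, v⟫ = (Pi.single i (1 : ℂ) : J → ℂ) j := fun j => by
      rw [← congrFun hv j]; rfl
    have hTvi : T v = x i := by
      rw [hTv]
      rw [Finset.sum_congr rfl (fun j _ => by rw [hvj j])]
      rw [Finset.sum_eq_single i]
      · simp
      · intro b _ hb; simp [Pi.single_eq_of_ne hb]
      · intro h; exact absurd (Finset.mem_univ i) h
    have hvi : x i = (A : ℂ) • v := by rw [← hTvi, hTA]
    rw [hvi, inner_smul_right, hvj j, Pi.single_apply]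
  have hAne : ∀ (A : ℝ), 0 < A → (A : ℂ) ≠ 0 := fun A hA => by
    exact_mod_cast ne_of_gt hA
  refine ⟨hli, ?_, ?_⟩
  · rintro ⟨A, hA, ht⟩ i j hij
    have := key A hA ht j i
    rw [if_neg hij] at this
    simpa using this
  · intro hp
    rw [orthonormal_iff_ite]
    intro i j
    have := key 1 one_pos (by simpa using hp) j i
    simpa using this
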